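/- Let H be the 4×4 matrix over 𝔽₂ with rows (1,1,0,0), (0,1,1,0), (1,0,1,0), (1,1,1,1). Then the vector x = (1,1,1,3) belongs to the fundamental cone K(H) and has max-fractional weight w_maxfrac(x) = 2, while the code C = ker H has minimum Hamming distance d(C) = 4 (its only nonzero codeword is (1,1,1,1)); in particular w_maxfrac^min(H) ≤ 2 < d(C). -/

import Mathlib

open Matrix BigOperators Finset

section Defs

variable {J I : Type*} [Fintype J] [Fintype I] [DecidableEq I]

/-- The support of row `j` of a binary matrix `H`. -/
def rowSupp (H : Matrix J I (ZMod 2)) (j : J) : Finset I :=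
  Finset.univ.filter fun i => H j i = 1

/-- The fundamental cone of a binary matrix `H`. -/
def fundCone (H : Matrix J I (ZMod 2)) : Set (I → ℝ) :=
  {x | (∀ i, 0 ≤ x i) ∧
    ∀ j : J, ∀ ℓ ∈ rowSupp H j, x ℓ ≤ ∑ i ∈ (rowSupp H j).erase ℓ, x i}

/-- BEC pseudoweight: size of the support. -/
noncomputable def wBEC (x : I → ℝ) : ℝ := ({i | x i ≠ 0}.ncard : ℝ)

/-- AWGNC pseudoweight. -/
noncomputable def wAWGNC (x : I → ℝ) : ℝ := (∑ i, x i) ^ 2 / ∑ i, x i ^ 2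

/-- Max-fractional weight. -/
noncomputable def wMaxFrac (x : I → ℝ) : ℝ := (∑ i, x i) / sSup (Set.range x)

/-- `H` is a parity-check matrix of the code `C`. -/
def IsParityCheck (H : Matrix J I (ZMod 2)) (C : Submodule (ZMod 2) (I → ZMod 2)) : Prop :=
  ∀ c, c ∈ C ↔ H.mulVec c = 0

/-- Minimum Hamming distance of a code. -/
noncomputable def minDist (C : Submodule (ZMod 2) (I → ZMod 2)) : ℕ :=
  sInf {d | ∃ c ∈ C, c ≠ 0 ∧ hammingNorm c = d}

/-- Minimum pseudoweight of `H` w.r.t. pseudoweight function `w`: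
the infimum of `w` over all nonzero pseudocodewords (`⊤` if there are none). -/
noncomputable def minPW (w : (I → ℝ) → ℝ) (H : Matrix J I (ZMod 2)) : EReal :=
  sInf ((fun x => (w x : EReal)) '' (fundCone H \ {0}))

/-- The chain (connectivity) relation associated with a binary matrix whose rows
have weight 2: `i` and `i'` are related iff they are equal or joined by a chain of rows
whose supports are exactly consecutive pairs. -/
def chainRel (H : Matrix J I (ZMod 2)) (i i' : I) : Prop :=
  i = i' ∨ ∃ ℓ : ℕ, 1 ≤ ℓ ∧ ∃ (c : Fin (ℓ + 1) → I) (r : Fin ℓ → J),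
    c 0 = i ∧ c (Fin.last ℓ) = i' ∧
    ∀ t : Fin ℓ, rowSupp H (r t) = {c t.castSucc, c t.succ}

/-- The 0-1 real matrix associated with a binary matrix. -/
def toRealMatrix (H : Matrix J I (ZMod 2)) : Matrix J I ℝ :=
  Matrix.of fun j i => if H j i = 1 then (1 : ℝ) else 0

/-- The Tanner graph of a binary matrix. -/
def tannerGraph (H : Matrix J I (ZMod 2)) : SimpleGraph (J ⊕ I) :=
  SimpleGraph.fromRel fun u v => ∃ j i, u = Sum.inl j ∧ v = Sum.inr i ∧ H j i = 1

end Defs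

/-- The multiset of (real) eigenvalues, with multiplicity, of a real square matrix:
the real roots of its characteristic polynomial. -/
noncomputable def eigMult {ι : Type*} [Fintype ι] [DecidableEq ι] (A : Matrix ι ι ℝ) :
    Multiset ℝ :=
  A.charpoly.roots

section FinDefs

variable {n : ℕ}

/-- The non-increasing rearrangement of a real vector. -/
noncomputable def sortDesc (x : Fin n → ℝ) : Fin n → ℝ :=
  fun i => x (Tuple.sort (fun j => -x j) i)

/-- `Φ(ξ) = ∫₀^ξ φ`, where `φ(ξ) = x'_i` for `i - 1 < ξ ≤ i` and `x'` is the
non-increasing rearrangement of `x`. -/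
noncomputable def bigPhi (x : Fin n → ℝ) (ξ : ℝ) : ℝ :=
  ∑ i : Fin n, sortDesc x i * min 1 (max 0 (ξ - (i : ℝ)))

/-- BSC pseudoweight: `2 Φ⁻¹(Φ(n)/2)`. -/
noncomputable def wBSC (x : Fin n → ℝ) : ℝ :=
  2 * sInf {ξ : ℝ | bigPhi x (n : ℝ) / 2 ≤ bigPhi x ξ}

/-- The pseudocodeword redundancy of a code `C` w.r.t. the pseudoweight function `w`:
the smallest number of rows of a parity-check matrix `H` of `C` whose minimum
pseudoweight equals the minimum distance of `C` (`⊤` if there is no such matrix). -/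
noncomputable def pcRedundancy (w : (Fin n → ℝ) → ℝ)
    (C : Submodule (ZMod 2) (Fin n → ZMod 2)) : ℕ∞ :=
  sInf {k : ℕ∞ | ∃ (m : ℕ) (H : Matrix (Fin m) (Fin n) (ZMod 2)),
    k = (m : ℕ∞) ∧ IsParityCheck H C ∧ minPW w H = ((minDist C : ℝ) : EReal)}

end FinDefs

/-- The 4×4 matrix of the remark following Proposition `row_weight_2`. -/
def H19 : Matrix (Fin 4) (Fin 4) (ZMod 2) :=
  !![1,1,0,0;
     0,1,1,0;
     1,0,1,0;
     1,1,1,1]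

/-- The code `C = ker H19`. -/
noncomputable def C19 : Submodule (ZMod 2) (Fin 4 → ZMod 2) :=
  LinearMap.ker H19.mulVecLin

/-- The vector `x = (1,1,1,3)` lies in the fundamental cone `K(H19)` and has
max-fractional weight 2, while `C = ker H19` has minimum Hamming distance 4 (its only
nonzero codeword being `(1,1,1,1)`); in particular `w_maxfrac^min(H19) ≤ 2 < d(C)`. -/
theorem statement19 :
    (![1, 1, 1, 3] : Fin 4 → ℝ) ∈ fundCone H19 ∧
    wMaxFrac (![1, 1, 1, 3] : Fin 4 → ℝ) = 2 ∧
    (∀ c ∈ C19, c = 0 ∨ c = ![1, 1, 1, 1]) ∧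
    minDist C19 = 4 ∧
    minPW wMaxFrac H19 ≤ ((2 : ℝ) : EReal) ∧
    ((2 : ℝ) : EReal) < ((minDist C19 : ℝ) : EReal) := by
  have hcw : ∀ c : Fin 4 → ZMod 2, H19.mulVec c = 0 → (c = 0 ∨ c = ![1,1,1,1]) := by decide
  have hmemC : ∀ c ∈ C19, c = 0 ∨ c = ![1,1,1,1] := by
    intro c hc
    exact hcw c (by simpa [C19, Matrix.mulVecLin_apply] using hc)
  have hcone : (![1, 1, 1, 3] : Fin 4 → ℝ) ∈ fundCone H19 := by
    clear hcw hmemC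
    constructor
    · intro i; fin_cases i <;> norm_num
    · intro j ℓ hℓ
      rw [Finset.sum_erase_eq_sub hℓ]
      unfold rowSupp at *
      rw [Finset.sum_filter]
      simp only [Finset.mem_filter, Finset.mem_univ, true_and] at hℓ
      fin_cases j <;> fin_cases ℓ <;> simp_all [H19, Fin.sum_univ_four] <;> norm_num
  have hsup : sSup (Set.range (![1, 1, 1, 3] : Fin 4 → ℝ)) = 3 := by
    apply le_antisymm
    · apply csSup_le (Set.range_nonempty _)
      rintro y ⟨i, rfl⟩; fin_cases i <;> norm_num
    · apply le_csSup
      · exact ⟨3, by rintro y ⟨i, rfl⟩; fin_cases i <;> norm_num⟩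
      · exact ⟨3, rfl⟩
  have hw : wMaxFrac (![1, 1, 1, 3] : Fin 4 → ℝ) = 2 := by
    rw [wMaxFrac, hsup, Fin.sum_univ_four]
    norm_num [Matrix.cons_val_three, Matrix.cons_val_two]
  have hmd : minDist C19 = 4 := by
    have hset : {d | ∃ c ∈ C19, c ≠ 0 ∧ hammingNorm c = d} = {4} := by
      ext d
      constructor
      · rintro ⟨c, hc, hne, rfl⟩
        rcases hmemC c hc with rfl | rfl
        · exact absurd rfl hne
        · simp [hammingNorm]; decide
      · rintro rfl
        refine ⟨![1,1,1,1], ?_, by decide, by decide⟩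
        simp only [C19, LinearMap.mem_ker, Matrix.mulVecLin_apply]
        decide
    rw [minDist, hset, csInf_singleton]
  refine ⟨hcone, hw, hmemC, hmd, ?_, ?_⟩
  · have hne : (![1, 1, 1, 3] : Fin 4 → ℝ) ≠ 0 := by
      intro h
      have := congrFun h 3
      norm_num [Matrix.cons_val_three] at this
    have : ((2 : ℝ) : EReal) ∈ (fun x => ((wMaxFrac x : ℝ) : EReal)) '' (fundCone H19 \ {0}) :=
      ⟨![1, 1, 1, 3], ⟨hcone, hne⟩, by simp only [hw]⟩
    exact sInf_le this
  · rw [hmd]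
    norm_num
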